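/- Let π_i be a target policy, μ_i a behavior policy, and β^{(i)} a trace function satisfying Condition 1, with C_i := Σ_{t=0}^∞ γ^t B_t^{(i)} and M_i Q := Q + C_i (T_{π_i} Q − Q). Then for every Q ∈ ℝ^n, M_i Q − Q* ≤ Z_i (Q − Q*) entrywise, where Z_i := I − C_i (I − γ P_{π_i}) and Q* is the fixed point of the Bellman optimality operator T. -/

import Mathlib

open scoped BigOperators

/-- `P` is a transition function: `P s a` is a probability distribution on next states. -/
def IsTransition {S A : Type} [Fintype S] (P : S → A → S → ℝ) : Prop :=
  (∀ s a s', 0 ≤ P s a s') ∧ ∀ s a, ∑ s', P s a s' = 1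

/-- `π` is a policy: `π s` is a probability distribution on actions. -/
def IsPolicy {S A : Type} [Fintype A] (π : S → A → ℝ) : Prop :=
  (∀ s a, 0 ≤ π s a) ∧ ∀ s, ∑ a, π s a = 1

/-- A behavior policy assigns positive probability to every action in every state. -/
def IsBehavior {S A : Type} [Fintype A] (μ : S → A → ℝ) : Prop :=
  IsPolicy μ ∧ ∀ s a, 0 < μ s a

/-- The policy matrix `P_π((s,a),(s',a')) = P(s'|s,a)·π(a'|s')`. -/
def polMat {S A : Type} (P : S → A → S → ℝ) (π : S → A → ℝ) :
    Matrix (S × A) (S × A) ℝ :=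
  fun x y => P x.1 x.2 y.1 * π y.1 y.2

/-- The importance-sampling ratio `ρ(s,a) = π(a|s) / μ(a|s)`. -/
noncomputable def isRatio {S A : Type} (π μ : S → A → ℝ) (x : S × A) : ℝ :=
  π x.1 x.2 / μ x.1 x.2

/-- Probability under behavior policy `μ` of a length-`t` trajectory
`F = ((S_0,A_0),…,(S_t,A_t))`:  `∏_{k=1}^t P(S_k|S_{k-1},A_{k-1})·μ(A_k|S_k)`. -/
def prMu {S A : Type} (P : S → A → S → ℝ) (μ : S → A → ℝ) {t : ℕ}
    (F : Fin (t + 1) → S × A) : ℝ :=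
  ∏ k : Fin t,
    (P (F k.castSucc).1 (F k.castSucc).2 (F k.succ).1 * μ (F k.succ).1 (F k.succ).2)

/-- A trace function: a nonnegative weight for every finite trajectory,
equal to `1` on length-0 trajectories. -/
def IsTrace {S A : Type} (β : (t : ℕ) → (Fin (t + 1) → S × A) → ℝ) : Prop :=
  (∀ t F, 0 ≤ β t F) ∧ ∀ F : Fin 1 → S × A, β 0 F = 1

/-- Condition 1: `β(F_t) ≤ β(F_{t-1})·ρ_t` for every `t ≥ 1` and every trajectory `F_t`,
where `F_{t-1}` is the length-`(t-1)` prefix. -/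
def Cond1 {S A : Type} (π μ : S → A → ℝ)
    (β : (t : ℕ) → (Fin (t + 1) → S × A) → ℝ) : Prop :=
  ∀ (t : ℕ) (F : Fin (t + 2) → S × A),
    β (t + 1) F ≤ β t (fun k => F k.castSucc) * isRatio π μ (F (Fin.last (t + 1)))

/-- The matrix `B_t((s,a),(s',a')) = Σ_{F_t from (s,a) ending at (s',a')} Pr_μ(F_t)·β(F_t)`. -/
noncomputable def Bmat {S A : Type} [Fintype S] [Fintype A] [DecidableEq S] [DecidableEq A]
    (P : S → A → S → ℝ) (μ : S → A → ℝ)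
    (β : (t : ℕ) → (Fin (t + 1) → S × A) → ℝ) (t : ℕ) :
    Matrix (S × A) (S × A) ℝ :=
  fun x y => ∑ F : Fin (t + 1) → S × A,
    if F 0 = x ∧ F (Fin.last t) = y then prMu P μ F * β t F else 0

/-- The Bellman operator `T_π Q = R + γ P_π Q`. -/
noncomputable def Tpi {S A : Type} [Fintype S] [Fintype A]
    (P : S → A → S → ℝ) (R : S × A → ℝ) (π : S → A → ℝ) (γ : ℝ)
    (Q : S × A → ℝ) : S × A → ℝ :=
  fun x => R x + γ * (polMat P π).mulVec Q x

/-- The Bellman optimality operator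
`(T Q)(s,a) = R(s,a) + γ Σ_{s'} P(s'|s,a) max_{a'} Q(s',a')`. -/
noncomputable def Topt {S A : Type} [Fintype S] [Fintype A] [Nonempty A]
    (P : S → A → S → ℝ) (R : S × A → ℝ) (γ : ℝ) (Q : S × A → ℝ) : S × A → ℝ :=
  fun x => R x + γ * ∑ s', P x.1 x.2 s' * ⨆ a', Q (s', a')

/-- The operator `M Q = Q + Σ_{t=0}^∞ γ^t B_t (T_π Q − Q)`. -/
noncomputable def Mop {S A : Type} [Fintype S] [Fintype A] [DecidableEq S] [DecidableEq A]
    (P : S → A → S → ℝ) (R : S × A → ℝ) (π μ : S → A → ℝ)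
    (β : (t : ℕ) → (Fin (t + 1) → S × A) → ℝ) (γ : ℝ)
    (Q : S × A → ℝ) : S × A → ℝ :=
  fun x => Q x + ∑' t : ℕ,
    γ ^ t * (Bmat P μ β t).mulVec (fun y => Tpi P R π γ Q y - Q y) x

/-- The matrix `Z = Σ_{t=1}^∞ γ^t (B_{t−1} P_π − B_t)`. -/
noncomputable def Zmat {S A : Type} [Fintype S] [Fintype A] [DecidableEq S] [DecidableEq A]
    (P : S → A → S → ℝ) (π μ : S → A → ℝ)
    (β : (t : ℕ) → (Fin (t + 1) → S × A) → ℝ) (γ : ℝ) :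
    Matrix (S × A) (S × A) ℝ :=
  fun x y => ∑' t : ℕ,
    γ ^ (t + 1) * ((Bmat P μ β t * polMat P π - Bmat P μ β (t + 1)) x y)

/-- The matrix `C = Σ_{t=0}^∞ γ^t B_t`. -/
noncomputable def Cmat {S A : Type} [Fintype S] [Fintype A] [DecidableEq S] [DecidableEq A]
    (P : S → A → S → ℝ) (μ : S → A → ℝ)
    (β : (t : ℕ) → (Fin (t + 1) → S × A) → ℝ) (γ : ℝ) :
    Matrix (S × A) (S × A) ℝ :=
  fun x y => ∑' t : ℕ, γ ^ t * Bmat P μ β t x y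

/-- The operator `M Q = Q + C (T_π Q − Q)` with `C = Σ_t γ^t B_t`. -/
noncomputable def MopC {S A : Type} [Fintype S] [Fintype A] [DecidableEq S] [DecidableEq A]
    (P : S → A → S → ℝ) (R : S × A → ℝ) (π μ : S → A → ℝ)
    (β : (t : ℕ) → (Fin (t + 1) → S × A) → ℝ) (γ : ℝ)
    (Q : S × A → ℝ) : S × A → ℝ :=
  fun x => Q x + (Cmat P μ β γ).mulVec (fun y => Tpi P R π γ Q y - Q y) x

/-- upper bound in the control analysis:
`M_i Q − Q* ≤ Z_i (Q − Q*)` entrywise, where `Z_i = I − C_i(I − γ P_{π_i})`. -/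
theorem stmt5 {S A : Type} [Fintype S] [Fintype A] [DecidableEq S] [DecidableEq A]
    [Nonempty S] [Nonempty A]
    (P : S → A → S → ℝ) (R : S × A → ℝ) (π μ : S → A → ℝ) (γ : ℝ)
    (β : (t : ℕ) → (Fin (t + 1) → S × A) → ℝ)
    (hP : IsTransition P) (hπ : IsPolicy π) (hμ : IsBehavior μ) (hβ : IsTrace β)
    (hγ0 : 0 ≤ γ) (hγ1 : γ < 1)
    (hc : Cond1 π μ β)
    (Qstar : S × A → ℝ) (hQstar : Topt P R γ Qstar = Qstar) :
    ∀ (Q : S × A → ℝ) (x : S × A),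
      MopC P R π μ β γ Q x - Qstar x ≤
        ((1 - Cmat P μ β γ * (1 - γ • polMat P π)).mulVec (Q - Qstar)) x := by

  intro Q x
  obtain ⟨hP0, hP1⟩ := hP
  obtain ⟨hπ0, hπ1⟩ := hπ
  obtain ⟨⟨hμ0, _⟩, hμpos⟩ := hμ
  obtain ⟨hβ0, _⟩ := hβ
  set Pπ := polMat P π with hPπ
  set C := Cmat P μ β γ with hCdef
  set w : (S × A) → ℝ := Q - Qstar with hw
  set u : (S × A) → ℝ := fun y => Tpi P R π γ Qstar y - Qstar y with hu
  -- C is entrywise nonnegative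
  have hC : ∀ y z, 0 ≤ C y z := by
    intro y z
    apply tsum_nonneg
    intro t
    apply mul_nonneg (pow_nonneg hγ0 t)
    apply Finset.sum_nonneg
    intro F _
    split
    · exact mul_nonneg (Finset.prod_nonneg fun k _ =>
        mul_nonneg (hP0 _ _ _) (hμ0 _ _)) (hβ0 _ _)
    · exact le_refl 0
  -- T_π Q* ≤ Q*
  have hneg : ∀ y, u y ≤ 0 := by
    intro y
    have h2 : ∀ s' : S, ∑ a', π s' a' * Qstar (s', a') ≤ ⨆ a', Qstar (s', a') := by
      intro s'
      calc ∑ a', π s' a' * Qstar (s', a')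
          ≤ ∑ a', π s' a' * ⨆ a'', Qstar (s', a'') := by
            apply Finset.sum_le_sum
            intro a _
            exact mul_le_mul_of_nonneg_left
              (le_ciSup (f := fun a'' => Qstar (s', a''))
                (Set.Finite.bddAbove (Set.finite_range _)) a) (hπ0 _ _)
        _ = ⨆ a'', Qstar (s', a'') := by
            rw [← Finset.sum_mul, hπ1, one_mul]
    have h1 : Tpi P R π γ Qstar y ≤ Qstar y := by
      conv_rhs => rw [← hQstar]
      unfold Tpi Topt
      apply add_le_add_right
      apply mul_le_mul_of_nonneg_left _ hγ0
      rw [Matrix.mulVec, dotProduct]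
      rw [Fintype.sum_prod_type]
      apply Finset.sum_le_sum
      intro s' _
      calc ∑ a', polMat P π y (s', a') * Qstar (s', a')
          = P y.1 y.2 s' * ∑ a', π s' a' * Qstar (s', a') := by
            rw [Finset.mul_sum]
            apply Finset.sum_congr rfl
            intro a _
            simp [polMat, mul_assoc]
        _ ≤ P y.1 y.2 s' * ⨆ a', Qstar (s', a') :=
            mul_le_mul_of_nonneg_left (h2 s') (hP0 _ _ _)
    simpa [hu] using sub_nonpos.mpr h1
  -- pointwise identity: TπQ − Q = u − (1 − γPπ) w
  have hv : (fun y => Tpi P R π γ Q y - Q y) = u - (1 - γ • Pπ).mulVec w := by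
    funext y
    simp only [Pi.sub_apply, Matrix.sub_mulVec, Matrix.one_mulVec,
      Matrix.smul_mulVec, hw, Matrix.mulVec_sub, Pi.smul_apply,
      smul_eq_mul, hu, Tpi]
    ring
  have key : MopC P R π μ β γ Q x - Qstar x
      = ((1 - C * (1 - γ • Pπ)).mulVec (Q - Qstar)) x + C.mulVec u x := by
    simp only [MopC, hv, ← hCdef, Matrix.mulVec_sub, Matrix.sub_mulVec,
      Matrix.one_mulVec, Matrix.mulVec_mulVec, Matrix.mul_sub, Matrix.mul_one, ← hw]
    simp only [hw, Pi.sub_apply]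
    ring
  rw [key]
  have hle : C.mulVec u x ≤ 0 := by
    apply Finset.sum_nonpos
    intro z _
    exact mul_nonpos_iff.mpr (Or.inl ⟨hC x z, hneg z⟩)
  linarith
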